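/- Let A, B, C, D be diagonal n×n real matrices with A·D − B·C = 1 (the identity matrix), and let G be a symmetric n×n real matrix such that A + B·G is invertible. Then A + G·B is also invertible, the identity (C + D·G)·(A + B·G)⁻¹ = (A + G·B)⁻¹·(C + G·D) holds, and consequently the matrix G̃ = (C + D·G)·(A + B·G)⁻¹ is symmetric. -/
import Mathlib

open Matrix

lemma diag_comm {n : ℕ} {A B : Matrix (Fin n) (Fin n) ℝ} (hA : A.IsDiag) (hB : B.IsDiag) :
    A * B = B * A := by
  ext i j
  simp only [Matrix.mul_apply]
  refine Finset.sum_congr rfl fun k _ => ?_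
  by_cases hik : i = k
  · subst hik
    by_cases hkj : i = j
    · subst hkj; ring
    · rw [hB hkj, hA hkj]; ring
  · rw [hA hik, hB hik]; ring

theorem stmt6 {n : ℕ} (A B C D G : Matrix (Fin n) (Fin n) ℝ)
    (hA : A.IsDiag) (hB : B.IsDiag) (hC : C.IsDiag) (hD : D.IsDiag)
    (hG : G.IsSymm)
    (hABCD : A * D - B * C = 1)
    (h : IsUnit (A + B * G)) :
    IsUnit (A + G * B) ∧
      (C + D * G) * (A + B * G)⁻¹ = (A + G * B)⁻¹ * (C + G * D) ∧
      ((C + D * G) * (A + B * G)⁻¹).IsSymm := by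
  have hT : (A + B * G)ᵀ = A + G * B := by
    rw [transpose_add, transpose_mul, hG.eq, hA.isSymm.eq, hB.isSymm.eq]
  have h2 : IsUnit (A + G * B) := by
    rw [← hT, Matrix.isUnit_iff_isUnit_det, Matrix.det_transpose,
      ← Matrix.isUnit_iff_isUnit_det]
    exact h
  have hAD : A * D = 1 + B * C := sub_eq_iff_eq_add.mp hABCD
  have hDA : D * A = A * D := diag_comm hD hA
  have hBC : B * C = C * B := diag_comm hB hC
  have hBD : B * D = D * B := diag_comm hB hD
  have hAC : A * C = C * A := diag_comm hA hC
  have e1 : A * D * G = G + B * C * G := by rw [hAD]; noncomm_ring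
  have e2 : G * D * A = G + G * B * C := by
    rw [Matrix.mul_assoc, hDA, hAD]; noncomm_ring
  have e3 : G * B * D = G * D * B := by
    rw [Matrix.mul_assoc, hBD, ← Matrix.mul_assoc]
  have hkey : (A + G * B) * (C + D * G) = (C + G * D) * (A + B * G) := by
    have L : (A + G * B) * (C + D * G) = A * C + A * D * G + G * B * C + G * B * D * G := by
      noncomm_ring
    have R : (C + G * D) * (A + B * G) = C * A + C * B * G + G * D * A + G * D * B * G := by
      noncomm_ring
    rw [L, R, hAC, e1, e3, e2, hBC]
    abel
  have hu1 : (A + B * G) * (A + B * G)⁻¹ = 1 :=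
    Matrix.mul_nonsing_inv _ ((Matrix.isUnit_iff_isUnit_det _).mp h)
  have hu2 : (A + G * B)⁻¹ * (A + G * B) = 1 :=
    Matrix.nonsing_inv_mul _ ((Matrix.isUnit_iff_isUnit_det _).mp h2)
  have heq : (C + D * G) * (A + B * G)⁻¹ = (A + G * B)⁻¹ * (C + G * D) := by
    calc (C + D * G) * (A + B * G)⁻¹
        = (A + G * B)⁻¹ * ((A + G * B) * ((C + D * G) * (A + B * G)⁻¹)) := by
          rw [← Matrix.mul_assoc, hu2, Matrix.one_mul]
      _ = (A + G * B)⁻¹ * ((C + G * D) * ((A + B * G) * (A + B * G)⁻¹)) := by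
          rw [← Matrix.mul_assoc (A + G * B), hkey, Matrix.mul_assoc]
      _ = (A + G * B)⁻¹ * (C + G * D) := by rw [hu1, Matrix.mul_one]
  refine ⟨h2, heq, ?_⟩
  rw [Matrix.IsSymm, transpose_mul, Matrix.transpose_nonsing_inv, hT, heq,
    transpose_add, transpose_mul, hG.eq, hC.isSymm.eq, hD.isSymm.eq]
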